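/- Let G be the group G = ⟨a,b,c,d⟩ with relations a^27 = c^27 = b^9 = d^9 = 1, [a,c]=[a,d]=[b,c]=[b,d]=1, b⁻¹ab = a^4, d⁻¹cd = c^4. Then the cyclic subgroup K = ⟨a^3 b^2 c^3 d⟩ is not conjugate-permutable in G: with x = abcd, the element (x⁻¹kx)·k (for k = a^3b^2c^3d) lies in K^x·K but not in K·K^x. -/

import Mathlib

open Pointwise
open scoped commutatorElement

/-- Relators of `G = ⟨a,b,c,d ∣ a^27 = c^27 = b^9 = d^9 = [a,c] = [a,d] = [b,c] = [b,d] = 1,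
b⁻¹ab = a^4, d⁻¹cd = c^4⟩`, with `a, b, c, d` the generators `0, 1, 2, 3`. -/
def xuRels : Set (FreeGroup (Fin 4)) :=
  { FreeGroup.of 0 ^ 27, FreeGroup.of 2 ^ 27, FreeGroup.of 1 ^ 9, FreeGroup.of 3 ^ 9,
    ⁅FreeGroup.of (0 : Fin 4), FreeGroup.of 2⁆, ⁅FreeGroup.of (0 : Fin 4), FreeGroup.of 3⁆,
    ⁅FreeGroup.of (1 : Fin 4), FreeGroup.of 2⁆, ⁅FreeGroup.of (1 : Fin 4), FreeGroup.of 3⁆,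
    (FreeGroup.of 1)⁻¹ * FreeGroup.of 0 * FreeGroup.of 1 * (FreeGroup.of 0 ^ 4)⁻¹,
    (FreeGroup.of 3)⁻¹ * FreeGroup.of 2 * FreeGroup.of 3 * (FreeGroup.of 2 ^ 4)⁻¹ }

/-- The group of Xu–Zhang's Question 3.12. -/
def XuGroup : Type := PresentedGroup xuRels

instance : Group XuGroup := by unfold XuGroup; infer_instance

/-- The generators. -/
def xa : XuGroup := PresentedGroup.of 0
def xb : XuGroup := PresentedGroup.of 1
def xc : XuGroup := PresentedGroup.of 2
def xd : XuGroup := PresentedGroup.of 3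

/-! ### A concrete model: `(ZMod 27 ⋊ ZMod 9) × (ZMod 27 ⋊ ZMod 9)` -/

/-- A concrete model of the factor `⟨a, b ∣ a^27 = b^9 = 1, b⁻¹ab = a^4⟩`. -/
structure XH where
  m : ZMod 27
  i : ZMod 9
deriving DecidableEq

namespace XH

instance : Mul XH := ⟨fun p q => ⟨4 ^ q.i.val * p.m + q.m, p.i + q.i⟩⟩
instance : One XH := ⟨⟨0, 0⟩⟩
instance : Inv XH := ⟨fun p => ⟨-(4 ^ (-p.i).val * p.m), -p.i⟩⟩

theorem mul_def (p q : XH) : p * q = ⟨4 ^ q.i.val * p.m + q.m, p.i + q.i⟩ := rfl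
theorem inv_def (p : XH) : p⁻¹ = ⟨-(4 ^ (-p.i).val * p.m), -p.i⟩ := rfl

theorem pow_val_add (i j : ZMod 9) :
    (4 : ZMod 27) ^ (i + j).val = 4 ^ i.val * 4 ^ j.val := by revert i j; decide

theorem pow_val_neg (i : ZMod 9) :
    (4 : ZMod 27) ^ i.val * 4 ^ (-i).val = 1 := by revert i; decide

instance : Group XH where
  mul_assoc p q r := by
    simp only [mul_def, XH.mk.injEq]
    refine ⟨?_, add_assoc _ _ _⟩
    rw [pow_val_add]
    ring
  one_mul q := by
    simp only [mul_def]
    show (⟨4 ^ q.i.val * 0 + q.m, 0 + q.i⟩ : XH) = q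
    simp
  mul_one p := by
    simp only [mul_def]
    show (⟨4 ^ (0 : ZMod 9).val * p.m + 0, p.i + 0⟩ : XH) = p
    simp
  inv_mul_cancel p := by
    simp only [mul_def, inv_def]
    show (⟨4 ^ p.i.val * -(4 ^ (-p.i).val * p.m) + p.m, -p.i + p.i⟩ : XH) = ⟨0, 0⟩
    simp only [XH.mk.injEq]
    constructor
    · rw [mul_neg, ← mul_assoc, pow_val_neg, one_mul, neg_add_cancel]
    · exact neg_add_cancel _

end XH

/-- The concrete model of the whole group. -/
abbrev XM := XH × XH

/-- Images of the generators in the model. -/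
def fgen : Fin 4 → XM := fun n =>
  match n with
  | 0 => (⟨1, 0⟩, 1)
  | 1 => (⟨0, 1⟩, 1)
  | 2 => (1, ⟨1, 0⟩)
  | 3 => (1, ⟨0, 1⟩)

theorem fgen_rels : ∀ r ∈ xuRels, FreeGroup.lift fgen r = 1 := by
  intro r hr
  simp only [xuRels, Set.mem_insert_iff, Set.mem_singleton_iff] at hr
  rcases hr with rfl | rfl | rfl | rfl | rfl | rfl | rfl | rfl | rfl | rfl <;>
    simp only [commutatorElement_def, map_mul, map_pow, map_inv, FreeGroup.lift_apply_of] <;>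
    decide

/-- The canonical homomorphism from `XuGroup` to the model. -/
def xuHom : XuGroup →* XM := PresentedGroup.toGroup fgen_rels

theorem xuHom_of (n : Fin 4) : xuHom (PresentedGroup.of n) = fgen n :=
  PresentedGroup.toGroup.of fgen_rels

/-- The image of `k = a^3 b^2 c^3 d`. -/
def kM : XM := (⟨21, 2⟩, ⟨12, 1⟩)

/-- The image of `x = abcd`. -/
def xM : XM := (⟨4, 1⟩, ⟨4, 1⟩)

theorem xuHom_k : xuHom (xa ^ 3 * xb ^ 2 * xc ^ 3 * xd) = kM := by
  simp only [xa, xb, xc, xd, map_mul, map_pow, xuHom_of]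
  decide

theorem xuHom_x : xuHom (xa * xb * xc * xd) = xM := by
  simp only [xa, xb, xc, xd, map_mul, xuHom_of]
  decide

theorem kM_pow_nine : kM ^ (9 : ℕ) = 1 := by decide

theorem zpow_reduce {G : Type*} [Group G] {g : G} (h : g ^ (9 : ℕ) = 1) (m : ℤ) :
    g ^ m = g ^ (m % 9).toNat := by
  conv_lhs => rw [← Int.mul_ediv_add_emod m 9]
  rw [zpow_add, zpow_mul, show (9 : ℤ) = ((9 : ℕ) : ℤ) from rfl, zpow_natCast, h,
    one_zpow, one_mul, ← zpow_natCast, Int.toNat_of_nonneg (Int.emod_nonneg m (by norm_num))]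

theorem model_check : ∀ r s : Fin 9,
    kM ^ (r : ℕ) * (xM⁻¹ * kM ^ (s : ℕ) * xM) ≠ xM⁻¹ * kM * xM * kM := by decide

theorem xuGroup_not_conjugate_permutable :
    let k : XuGroup := xa ^ 3 * xb ^ 2 * xc ^ 3 * xd
    let x : XuGroup := xa * xb * xc * xd
    let K : Subgroup XuGroup := Subgroup.zpowers k
    let Kx : Set XuGroup := (fun g => x⁻¹ * g * x) '' (K : Set XuGroup)
    (x⁻¹ * k * x) * k ∈ Kx * (K : Set XuGroup) ∧
    (x⁻¹ * k * x) * k ∉ (K : Set XuGroup) * Kx := by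
  intro k x K Kx
  constructor
  · exact Set.mul_mem_mul (Set.mem_image_of_mem _ (Subgroup.mem_zpowers k))
      (Subgroup.mem_zpowers k)
  · intro h
    rw [Set.mem_mul] at h
    obtain ⟨u, hu, v, hv, huv⟩ := h
    obtain ⟨m, rfl⟩ := Subgroup.mem_zpowers_iff.mp hu
    obtain ⟨w, hw, rfl⟩ := hv
    obtain ⟨n, rfl⟩ := Subgroup.mem_zpowers_iff.mp hw
    have hk : k = xa ^ 3 * xb ^ 2 * xc ^ 3 * xd := rfl
    have hx : x = xa * xb * xc * xd := rfl
    have E := congrArg xuHom huv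
    simp only [map_mul, map_zpow, map_inv] at E
    rw [hk, hx, xuHom_k, xuHom_x] at E
    rw [zpow_reduce kM_pow_nine m, zpow_reduce kM_pow_nine n] at E
    have hm : (m % 9).toNat < 9 := by
      have h1 := Int.emod_nonneg m (show (9:ℤ) ≠ 0 by norm_num)
      have h2 := Int.emod_lt_of_pos m (show (0:ℤ) < 9 by norm_num)
      omega
    have hn : (n % 9).toNat < 9 := by
      have h1 := Int.emod_nonneg n (show (9:ℤ) ≠ 0 by norm_num)
      have h2 := Int.emod_lt_of_pos n (show (0:ℤ) < 9 by norm_num)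
      omega
    exact model_check ⟨(m % 9).toNat, hm⟩ ⟨(n % 9).toNat, hn⟩ E
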